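/- Let X be a real d×d matrix with ‖X‖ < 2π (matrices carrying a Banach-algebra norm), and suppose the matrix γ_u(−X) := ∑_{k=0}^∞ (B'_k/k!)·(−X)^k is invertible. Then γ_u(X)·(γ_u(−X))⁻¹ = exp(X), and consequently det(γ_u(X)·(γ_u(−X))⁻¹) = exp(trace X). -/

import Mathlib

open scoped Matrix

attribute [local instance] Matrix.linftyOpNormedRing Matrix.linftyOpNormedAlgebra

/-- The universal matrix `γ_u(X) := ∑_{k=0}^∞ (B'_k/k!)·X^k`, with `B'_k` the Bernoulli
numbers with convention `B'_1 = +1/2`. -/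
noncomputable def gammaU {d : ℕ} (X : Matrix (Fin d) (Fin d) ℝ) : Matrix (Fin d) (Fin d) ℝ :=
  ∑' k : ℕ, ((bernoulli' k : ℝ) / (Nat.factorial k : ℝ)) • X ^ k

namespace GammaUAux

open Matrix Finset Real

/-! ### Bound on Bernoulli numbers -/

lemma abs_bernoulli_div_factorial_le (k : ℕ) :
    |(bernoulli' k : ℝ)| / (Nat.factorial k : ℝ) ≤ 4 / (2 * Real.pi) ^ k := by
  have hpi : (0:ℝ) < Real.pi := Real.pi_pos
  have h2pi : (0:ℝ) < 2 * Real.pi := by linarith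
  match k with
  | 0 => norm_num
  | 1 =>
      have h1 : |(bernoulli' 1 : ℝ)| = 1/2 := by norm_num [bernoulli'_one]
      rw [h1, pow_one, Nat.factorial_one, Nat.cast_one, div_one,
        div_le_div_iff₀ (by norm_num) h2pi]
      nlinarith [Real.pi_le_four]
  | (n+2) =>
    rcases Nat.even_or_odd (n+2) with he | ho
    · obtain ⟨m, hm⟩ := he
      have hm2 : n + 2 = 2 * m := by omega
      have hm0 : m ≠ 0 := by omega
      have h := hasSum_zeta_nat hm0
      have hS0 : (0:ℝ) ≤ (-1 : ℝ) ^ (m + 1) * (2 : ℝ) ^ (2 * m - 1) * Real.pi ^ (2 * m) *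
          (bernoulli (2 * m) : ℝ) / (Nat.factorial (2 * m) : ℝ) :=
        h.nonneg fun i => by positivity
      have hS2 : (-1 : ℝ) ^ (m + 1) * (2 : ℝ) ^ (2 * m - 1) * Real.pi ^ (2 * m) *
          (bernoulli (2 * m) : ℝ) / (Nat.factorial (2 * m) : ℝ) ≤ 2 := by
        have hle := hasSum_le (g := fun i : ℕ => (1:ℝ) / (i : ℝ) ^ 2) ?_ h hasSum_zeta_two
        · nlinarith [Real.pi_lt_d2]
        · intro i
          match i with
          | 0 => norm_num [zero_pow (by omega : 2 * m ≠ 0)]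
          | (i+1) =>
              have h1 : (1:ℝ) ≤ (i + 1 : ℕ) := by exact_mod_cast Nat.one_le_iff_ne_zero.mpr (by omega)
              have h2 : ((i + 1 : ℕ) : ℝ) ^ 2 ≤ ((i + 1 : ℕ) : ℝ) ^ (2 * m) :=
                pow_le_pow_right₀ h1 (by omega)
              exact one_div_le_one_div_of_le (by positivity) h2
      set b : ℝ := (bernoulli (2 * m) : ℝ) with hb
      set C : ℝ := (2 : ℝ) ^ (2 * m - 1) * Real.pi ^ (2 * m) with hC
      have hCpos : 0 < C := by positivity
      have habs : C * (|b| / (Nat.factorial (2 * m) : ℝ)) ≤ 2 := by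
        have heq : C * (|b| / (Nat.factorial (2 * m) : ℝ)) =
            |(-1 : ℝ) ^ (m + 1) * (2 : ℝ) ^ (2 * m - 1) * Real.pi ^ (2 * m) * b /
              (Nat.factorial (2 * m) : ℝ)| := by
          rw [abs_div, abs_mul, abs_mul]
          rw [abs_mul, abs_pow, abs_neg, abs_one, one_pow, one_mul]
          rw [abs_pow, abs_of_nonneg (by norm_num : (0:ℝ) ≤ 2)]
          rw [abs_pow, abs_of_nonneg hpi.le]
          rw [abs_of_nonneg (by positivity : (0:ℝ) ≤ (Nat.factorial (2 * m) : ℝ)), hC]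
          ring
        rw [heq, abs_of_nonneg hS0]
        exact hS2
      have h2m : ((2:ℝ) * Real.pi) ^ (2 * m) = 2 * C := by
        rw [mul_pow, hC]
        have h2 : (2:ℝ) ^ (2 * m) = 2 * 2 ^ (2 * m - 1) := by
          rw [← pow_succ']
          congr 1
          omega
        rw [h2]; ring
      have hbb : (bernoulli' (n + 2) : ℝ) = b := by
        rw [hm2, hb, bernoulli_eq_bernoulli'_of_ne_one (by omega)]
      rw [hbb]
      have hfact : (Nat.factorial (n + 2) : ℝ) = (Nat.factorial (2 * m) : ℝ) := by rw [hm2]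
      rw [hfact]
      have hgoal : (4:ℝ) / (2 * Real.pi) ^ (n + 2) = 2 / C := by
        rw [(by rw [hm2] : (2 * Real.pi) ^ (n + 2) = (2 * Real.pi) ^ (2 * m)), h2m]
        rw [div_eq_div_iff (by positivity) hCpos.ne']
        ring
      rw [hgoal, le_div_iff₀ hCpos]
      linarith [habs]
    · rw [bernoulli'_eq_zero_of_odd ho (by omega)]
      simp only [Rat.cast_zero, abs_zero, zero_div]
      positivity

lemma abs_bernoulli_div_factorial_le' (k : ℕ) :
    |(bernoulli k : ℝ)| / (Nat.factorial k : ℝ) ≤ 4 / (2 * Real.pi) ^ k := by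
  have h : |(bernoulli k : ℝ)| = |(bernoulli' k : ℝ)| := by
    rw [show bernoulli k = (-1) ^ k * bernoulli' k from rfl]
    push_cast
    rw [abs_mul, abs_pow, abs_neg, abs_one, one_pow, one_mul]
  rw [h]
  exact abs_bernoulli_div_factorial_le k

/-! ### Summability -/

lemma summable_norm_bernoulli_series {d : ℕ} (Y : Matrix (Fin d) (Fin d) ℝ)
    (hY : ‖Y‖ < 2 * Real.pi) :
    Summable fun k : ℕ => ‖((bernoulli k : ℝ) / (Nat.factorial k : ℝ)) • Y ^ k‖ := by
  have hpi : (0:ℝ) < Real.pi := Real.pi_pos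
  have h2pi : (0:ℝ) < 2 * Real.pi := by linarith
  rw [← summable_nat_add_iff 1]
  set r : ℝ := ‖Y‖ / (2 * Real.pi) with hr
  have hr0 : 0 ≤ r := by positivity
  have hr1 : r < 1 := (div_lt_one h2pi).mpr hY
  refine Summable.of_nonneg_of_le (fun k => norm_nonneg _) (fun k => ?_)
    ((summable_geometric_of_lt_one hr0 hr1).mul_left (4 * r))
  have h1 : ‖((bernoulli (k+1) : ℝ) / (Nat.factorial (k+1) : ℝ)) • Y ^ (k+1)‖ ≤
      (|(bernoulli (k+1) : ℝ)| / (Nat.factorial (k+1) : ℝ)) * ‖Y‖ ^ (k+1) := by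
    rw [norm_smul, Real.norm_eq_abs, abs_div,
      abs_of_nonneg (by positivity : (0:ℝ) ≤ (Nat.factorial (k+1) : ℝ))]
    gcongr
    exact norm_pow_le' Y (Nat.succ_pos k)
  refine h1.trans ?_
  have h2 : (|(bernoulli (k+1) : ℝ)| / (Nat.factorial (k+1) : ℝ)) * ‖Y‖ ^ (k+1) ≤
      (4 / (2 * Real.pi) ^ (k+1)) * ‖Y‖ ^ (k+1) := by
    exact mul_le_mul_of_nonneg_right (abs_bernoulli_div_factorial_le' (k+1)) (by positivity)
  refine h2.trans (le_of_eq ?_)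
  rw [hr]
  rw [div_pow]
  field_simp
  ring

/-! ### Coefficient identity -/

lemma sum_choose_bernoulli (n : ℕ) :
    ∑ k ∈ Finset.range (n+1), (n.choose k : ℚ) * bernoulli k = bernoulli' n := by
  rw [Finset.sum_range_succ, sum_bernoulli, Nat.choose_self, Nat.cast_one, one_mul]
  rcases eq_or_ne n 1 with rfl | h
  · norm_num [bernoulli_one, bernoulli'_one]
  · rw [bernoulli_eq_bernoulli'_of_ne_one h, if_neg h, zero_add]

lemma sum_antidiagonal_bernoulli_q (n : ℕ) :
    ∑ p ∈ Finset.HasAntidiagonal.antidiagonal n,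
        ((Nat.factorial p.1 : ℚ))⁻¹ * ((bernoulli p.2) / (Nat.factorial p.2 : ℚ)) =
      (bernoulli' n) / (Nat.factorial n : ℚ) := by
  rw [Finset.Nat.sum_antidiagonal_eq_sum_range_succ
    (fun i j => ((Nat.factorial i : ℚ))⁻¹ * ((bernoulli j) / (Nat.factorial j : ℚ)))]
  rw [← Finset.sum_range_reflect]
  have hfac : (Nat.factorial n : ℚ) ≠ 0 := by positivity
  rw [eq_div_iff hfac, Finset.sum_mul, ← sum_choose_bernoulli n]
  refine Finset.sum_congr rfl fun j hj => ?_
  have hjn : j ≤ n := Nat.lt_succ_iff.mp (Finset.mem_range.mp hj)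
  simp only [Nat.succ_sub_one]
  rw [Nat.sub_sub_self hjn, Nat.cast_choose ℚ hjn]
  have h1 : (Nat.factorial j : ℚ) ≠ 0 := by positivity
  have h2 : (Nat.factorial (n - j) : ℚ) ≠ 0 := by positivity
  field_simp

lemma sum_antidiagonal_bernoulli (n : ℕ) :
    ∑ p ∈ Finset.HasAntidiagonal.antidiagonal n,
        ((Nat.factorial p.1 : ℝ))⁻¹ * ((bernoulli p.2 : ℝ) / (Nat.factorial p.2 : ℝ)) =
      (bernoulli' n : ℝ) / (Nat.factorial n : ℝ) := by
  have h := congrArg (Rat.cast : ℚ → ℝ) (sum_antidiagonal_bernoulli_q n)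
  push_cast at h
  exact h

/-! ### The multiplicative identity -/

lemma gammaU_eq_exp_mul {d : ℕ} (X : Matrix (Fin d) (Fin d) ℝ) (hX : ‖X‖ < 2 * Real.pi) :
    gammaU X = NormedSpace.exp X * gammaU (-X) := by
  classical
  have hgneg : gammaU (-X) = ∑' k : ℕ, ((bernoulli k : ℝ) / (Nat.factorial k : ℝ)) • X ^ k := by
    rw [gammaU]
    refine tsum_congr fun k => ?_
    have h1 : (-X) ^ k = ((-1 : ℝ) ^ k) • X ^ k := by
      rw [← neg_one_smul ℝ X, smul_pow]
    rw [h1, smul_smul]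
    congr 1
    rw [show bernoulli k = (-1) ^ k * bernoulli' k from rfl]
    push_cast
    ring
  rw [hgneg, NormedSpace.exp_eq_tsum (𝕂 := ℝ)]
  beta_reduce
  have hf : Summable fun k : ℕ => ‖((Nat.factorial k : ℝ))⁻¹ • X ^ k‖ :=
    NormedSpace.norm_expSeries_summable' X
  have hg : Summable fun k : ℕ => ‖((bernoulli k : ℝ) / (Nat.factorial k : ℝ)) • X ^ k‖ :=
    summable_norm_bernoulli_series X hX
  erw [tsum_mul_tsum_eq_tsum_sum_antidiagonal_of_summable_norm hf hg, gammaU]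
  refine tsum_congr fun n => ?_
  have hterm : ∀ p ∈ Finset.HasAntidiagonal.antidiagonal n,
      ((Nat.factorial p.1 : ℝ))⁻¹ • X ^ p.1 *
        ((bernoulli p.2 : ℝ) / (Nat.factorial p.2 : ℝ)) • X ^ p.2 =
      (((Nat.factorial p.1 : ℝ))⁻¹ * ((bernoulli p.2 : ℝ) / (Nat.factorial p.2 : ℝ))) • X ^ n := by
    intro p hp
    rw [smul_mul_smul_comm, ← pow_add, (Finset.HasAntidiagonal.mem_antidiagonal).mp hp]
  rw [Finset.sum_congr rfl hterm, ← Finset.sum_smul, sum_antidiagonal_bernoulli]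

/-! ### The determinant of the exponential -/

noncomputable def detCM (d : ℕ) : ContinuousMultilinearMap ℝ (fun _ : Fin d => (Fin d → ℝ)) ℝ :=
  MultilinearMap.mkContinuous
    (Matrix.detRowAlternating (R := ℝ) (n := Fin d)).toMultilinearMap (Nat.factorial d) (by
      intro m
      have hdet : Matrix.detRowAlternating.toMultilinearMap m = Matrix.det (Matrix.of m) := rfl
      rw [hdet, Matrix.det_apply]
      have hσ : ∀ σ : Equiv.Perm (Fin d),
          ‖Equiv.Perm.sign σ • ∏ i, Matrix.of m (σ i) i‖ ≤ ∏ i, ‖m i‖ := by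
        intro σ
        have h1 : ‖Equiv.Perm.sign σ • ∏ i, Matrix.of m (σ i) i‖ =
            ‖∏ i, Matrix.of m (σ i) i‖ := by
          rcases Int.units_eq_one_or (Equiv.Perm.sign σ) with h | h <;>
            rw [h] <;> simp [Units.smul_def]
        rw [h1, Real.norm_eq_abs, Finset.abs_prod]
        have h2 : ∏ i, |Matrix.of m (σ i) i| ≤ ∏ i, ‖m (σ i)‖ :=
          Finset.prod_le_prod (fun _ _ => abs_nonneg _)
            (fun i _ => norm_le_pi_norm (m (σ i)) i)
        refine h2.trans (le_of_eq ?_)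
        exact Equiv.prod_comp σ (fun i => ‖m i‖)
      calc ‖∑ σ : Equiv.Perm (Fin d), Equiv.Perm.sign σ • ∏ i, Matrix.of m (σ i) i‖
          ≤ ∑ σ : Equiv.Perm (Fin d), ‖Equiv.Perm.sign σ • ∏ i, Matrix.of m (σ i) i‖ :=
            norm_sum_le _ _
        _ ≤ ∑ _σ : Equiv.Perm (Fin d), ∏ i, ‖m i‖ := Finset.sum_le_sum fun σ _ => hσ σ
        _ = (Nat.factorial d : ℝ) * ∏ i, ‖m i‖ := by
            rw [Finset.sum_const, Finset.card_univ, Fintype.card_perm, nsmul_eq_mul]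
            simp)

noncomputable def rowsCLM (d : ℕ) : Matrix (Fin d) (Fin d) ℝ →L[ℝ] (Fin d → Fin d → ℝ) :=
  LinearMap.toContinuousLinearMap
    { toFun := fun M => M
      map_add' := fun _ _ => rfl
      map_smul' := fun _ _ => rfl }

lemma det_updateRow_one {d : ℕ} (i : Fin d) (v : Fin d → ℝ) :
    (Matrix.updateRow (1 : Matrix (Fin d) (Fin d) ℝ) i v).det = v i := by
  have h : Matrix.updateRow (1 : Matrix (Fin d) (Fin d) ℝ) i v =
      (Matrix.updateCol (1 : Matrix (Fin d) (Fin d) ℝ) i v)ᵀ := by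
    conv_lhs => rw [show (1 : Matrix (Fin d) (Fin d) ℝ) = (1 : Matrix (Fin d) (Fin d) ℝ)ᵀ from
      Matrix.transpose_one.symm]
    rw [Matrix.updateRow_transpose]
  rw [h, Matrix.det_transpose, ← Matrix.cramer_apply, Matrix.cramer_one]
  simp

lemma hasDerivAt_det_exp_zero {d : ℕ} (X : Matrix (Fin d) (Fin d) ℝ) :
    HasDerivAt (fun h : ℝ => (NormedSpace.exp (h • X)).det) X.trace 0 := by
  have hexp : HasDerivAt (fun h : ℝ => NormedSpace.exp (h • X)) X 0 := by
    have h := hasDerivAt_exp_smul_const (𝕂 := ℝ) (𝔸 := Matrix (Fin d) (Fin d) ℝ) X 0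
    simp [NormedSpace.exp_zero] at h
    exact h
  have hinner : HasDerivAt (fun h : ℝ => rowsCLM d (NormedSpace.exp (h • X)))
      (rowsCLM d X) 0 := (rowsCLM d).hasFDerivAt.comp_hasDerivAt 0 hexp
  have houter : HasFDerivAt (detCM d)
      ((detCM d).linearDeriv (rowsCLM d (NormedSpace.exp ((0:ℝ) • X))))
      (rowsCLM d (NormedSpace.exp ((0:ℝ) • X))) :=
    ContinuousMultilinearMap.hasFDerivAt (detCM d) (rowsCLM d (NormedSpace.exp ((0:ℝ) • X)))
  have hcomp := houter.comp_hasDerivAt 0 hinner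
  have hfun : (detCM d) ∘ (fun h : ℝ => rowsCLM d (NormedSpace.exp (h • X))) =
      fun h : ℝ => (NormedSpace.exp (h • X)).det := rfl
  rw [hfun] at hcomp
  refine hcomp.congr_deriv ?_
  symm
  rw [ContinuousMultilinearMap.linearDeriv_apply]
  have h1 : rowsCLM d (NormedSpace.exp ((0:ℝ) • X)) =
      ((1 : Matrix (Fin d) (Fin d) ℝ) : Fin d → Fin d → ℝ) := by
    rw [show rowsCLM d (NormedSpace.exp ((0:ℝ) • X)) = NormedSpace.exp ((0:ℝ) • X) from rfl]
    rw [zero_smul, NormedSpace.exp_zero]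
  rw [h1]
  have h2 : ∀ i : Fin d, detCM d
      (Function.update ((1 : Matrix (Fin d) (Fin d) ℝ) : Fin d → Fin d → ℝ) i (rowsCLM d X i)) =
      X i i := by
    intro i
    have h3 : detCM d
        (Function.update ((1 : Matrix (Fin d) (Fin d) ℝ) : Fin d → Fin d → ℝ) i (rowsCLM d X i)) =
        (Matrix.updateRow (1 : Matrix (Fin d) (Fin d) ℝ) i (X i)).det := rfl
    rw [h3, det_updateRow_one]
  rw [Finset.sum_congr rfl fun i _ => h2 i]
  simp [Matrix.trace, Matrix.diag]

lemma det_exp {d : ℕ} (X : Matrix (Fin d) (Fin d) ℝ) :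
    (NormedSpace.exp X).det = Real.exp X.trace := by
  set u : ℝ → ℝ := fun t => (NormedSpace.exp (t • X)).det with hu
  have hu' : ∀ t : ℝ, HasDerivAt u (X.trace * u t) t := by
    intro t
    have key : ∀ s : ℝ, u s = u t * (NormedSpace.exp ((s - t) • X)).det := by
      intro s
      have hsplit : s • X = t • X + (s - t) • X := by
        rw [← add_smul]; ring_nf
      have hcomm : Commute (t • X) ((s - t) • X) :=
        ((Commute.refl X).smul_left t).smul_right (s - t)
      rw [hu]
      simp only
      rw [hsplit, Matrix.exp_add_of_commute _ _ hcomm, Matrix.det_mul]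
    have hshift : HasDerivAt (fun s : ℝ => (NormedSpace.exp ((s - t) • X)).det)
        X.trace t := by
      have hsub : HasDerivAt (fun s : ℝ => s - t) 1 t := (hasDerivAt_id t).sub_const t
      have houter0 : HasDerivAt (fun h : ℝ => (NormedSpace.exp (h • X)).det) X.trace (t - t) := by
        simpa using hasDerivAt_det_exp_zero X
      have hc : HasDerivAt ((fun h : ℝ => (NormedSpace.exp (h • X)).det) ∘
          (fun s : ℝ => s - t)) (X.trace * 1) t :=
        HasDerivAt.comp (h := fun s : ℝ => s - t) t houter0 hsub
      simpa [Function.comp_def] using hc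
    have hmul := hshift.const_mul (u t)
    have : (fun s : ℝ => u t * (NormedSpace.exp ((s - t) • X)).det) = u := by
      funext s; rw [key s]
    rw [this] at hmul
    refine hmul.congr_deriv ?_
    ring
  have hv : ∀ t : ℝ, HasDerivAt (fun t : ℝ => u t * Real.exp (-X.trace * t)) 0 t := by
    intro t
    have hexp : HasDerivAt (fun s : ℝ => Real.exp (-X.trace * s))
        (Real.exp (-X.trace * t) * -X.trace) t := by
      have h1 : HasDerivAt (fun s : ℝ => -X.trace * s) (-X.trace) t := by
        simpa using (hasDerivAt_id t).const_mul (-X.trace)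
      exact h1.exp
    have h := (hu' t).mul hexp
    refine h.congr_deriv ?_
    ring
  have hdiff : Differentiable ℝ (fun t : ℝ => u t * Real.exp (-X.trace * t)) :=
    fun t => (hv t).differentiableAt
  have hconst := is_const_of_deriv_eq_zero hdiff (fun t => (hv t).deriv) 1 0
  have hu0 : u 0 = 1 := by
    rw [hu]; simp only; rw [zero_smul, NormedSpace.exp_zero, Matrix.det_one]
  rw [hu0] at hconst
  have hkey : u 1 * Real.exp (-X.trace) = 1 := by simpa using hconst
  rw [Real.exp_neg] at hkey
  have hu1 : u 1 = Real.exp X.trace := by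
    field_simp at hkey
    linarith
  rw [hu] at hu1
  simpa using hu1

end GammaUAux

/-- For `‖X‖ < 2π` with `γ_u(−X)` invertible, `γ_u(X)·(γ_u(−X))⁻¹ = exp(X)` and hence
`det(γ_u(X)·(γ_u(−X))⁻¹) = exp(trace X)`. -/
theorem gammaU_mul_inv_gammaU_neg {d : ℕ} (X : Matrix (Fin d) (Fin d) ℝ)
    (hX : ‖X‖ < 2 * Real.pi) (hinv : IsUnit (gammaU (-X))) :
    gammaU X * (gammaU (-X))⁻¹ = NormedSpace.exp X ∧
    (gammaU X * (gammaU (-X))⁻¹).det = Real.exp X.trace := by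
  have hdet : IsUnit (gammaU (-X)).det := (Matrix.isUnit_iff_isUnit_det _).mp hinv
  have h1 : gammaU X * (gammaU (-X))⁻¹ = NormedSpace.exp X := by
    rw [GammaUAux.gammaU_eq_exp_mul X hX, Matrix.mul_nonsing_inv_cancel_right _ _ hdet]
  exact ⟨h1, by rw [h1, GammaUAux.det_exp]⟩
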